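/- The reduction map from the stabilizer of e₁ in Sp(2g, ℤ) to the stabilizer of e₁ in Sp(2g, ℤ/ℓℤ) is surjective. -/

import Mathlib

open Matrix

/-- The first standard basis vector `e₁` of `R^{2g}` (indexed by `Fin g ⊕ Fin g`). -/
def stdE1 (g : ℕ) (R : Type*) [Zero R] [One R] : (Fin g ⊕ Fin g) → R :=
  fun k => match k with
  | Sum.inl i => if (i : ℕ) = 0 then 1 else 0
  | Sum.inr _ => 0

variable {R : Type*} [CommRing R]

def om {g : ℕ} (x y : (Fin g ⊕ Fin g) → R) : R :=
  ∑ i : Fin g, (x (Sum.inr i) * y (Sum.inl i) - x (Sum.inl i) * y (Sum.inr i))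

/-- vector supported at one coordinate -/
def sgl {g : ℕ} (k : Fin g ⊕ Fin g) (x : R) : (Fin g ⊕ Fin g) → R :=
  fun l => if l = k then x else 0

lemma add_dot {g : ℕ} (x y v : (Fin g ⊕ Fin g) → R) :
    (fun j => x j + y j) ⬝ᵥ v = x ⬝ᵥ v + y ⬝ᵥ v := add_dotProduct x y v

lemma sgl_dot {g : ℕ} (k : Fin g ⊕ Fin g) (x : R) (v : (Fin g ⊕ Fin g) → R) :
    sgl k x ⬝ᵥ v = x * v k := by
  simp [sgl, dotProduct, ite_mul, Finset.sum_ite_eq']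

lemma om_add_left {g : ℕ} (x y z : (Fin g ⊕ Fin g) → R) :
    om (x + y) z = om x z + om y z := by
  simp only [om, Pi.add_apply]
  rw [← Finset.sum_add_distrib]
  congr 1; funext i; ring

lemma om_add_right {g : ℕ} (x y z : (Fin g ⊕ Fin g) → R) :
    om x (y + z) = om x y + om x z := by
  simp only [om, Pi.add_apply]
  rw [← Finset.sum_add_distrib]
  congr 1; funext i; ring

lemma om_sgl_sgl {g : ℕ} (k k' : Fin g ⊕ Fin g) (x y : R) :
    om (sgl k x) (sgl k' y) = x * y * J (Fin g) R k k' := by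
  rcases k with i|i <;> rcases k' with j|j <;>
    simp [om, sgl, J, fromBlocks, one_apply, ite_mul, mul_ite, Finset.sum_ite_eq,
      Finset.sum_ite_eq', Finset.sum_sub_distrib] <;>
    split_ifs <;> simp_all <;> ring

lemma J_apply_inl_inl {g : ℕ} (i j : Fin g) : J (Fin g) R (Sum.inl i) (Sum.inl j) = 0 := rfl
lemma J_apply_inl_inr {g : ℕ} (i j : Fin g) :
    J (Fin g) R (Sum.inl i) (Sum.inr j) = -(if i = j then 1 else 0) := by
  simp [J, fromBlocks, one_apply]
lemma J_apply_inr_inl {g : ℕ} (i j : Fin g) :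
    J (Fin g) R (Sum.inr i) (Sum.inl j) = (if i = j then 1 else 0) := by
  simp [J, fromBlocks, one_apply]
lemma J_apply_inr_inr {g : ℕ} (i j : Fin g) : J (Fin g) R (Sum.inr i) (Sum.inr j) = 0 := rfl

lemma mulVec_J_inl {g : ℕ} (y : (Fin g ⊕ Fin g) → R) (i : Fin g) :
    (J (Fin g) R).mulVec y (Sum.inl i) = - y (Sum.inr i) := by
  simp [Matrix.mulVec, dotProduct, Fintype.sum_sum_type, J_apply_inl_inl, J_apply_inl_inr,
    ite_mul, Finset.sum_ite_eq]
lemma mulVec_J_inr {g : ℕ} (y : (Fin g ⊕ Fin g) → R) (i : Fin g) :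
    (J (Fin g) R).mulVec y (Sum.inr i) = y (Sum.inl i) := by
  simp [Matrix.mulVec, dotProduct, Fintype.sum_sum_type, J_apply_inr_inl, J_apply_inr_inr,
    ite_mul, Finset.sum_ite_eq]

lemma om_eq {g : ℕ} (x y : (Fin g ⊕ Fin g) → R) :
    om x y = x ⬝ᵥ (J (Fin g) R).mulVec y := by
  simp only [om, dotProduct, Fintype.sum_sum_type, mulVec_J_inl, mulVec_J_inr, mul_neg,
    Finset.sum_neg_distrib, Finset.sum_sub_distrib]
  ring

lemma sympl_entry_eq {g : ℕ} (A : Matrix (Fin g ⊕ Fin g) (Fin g ⊕ Fin g) R)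
    (k l : Fin g ⊕ Fin g) :
    (A * J (Fin g) R * Aᵀ) k l = A k ⬝ᵥ (J (Fin g) R).mulVec (A l) := by
  rw [Matrix.mul_assoc]
  simp only [Matrix.mul_apply, Matrix.mulVec, dotProduct, transpose_apply]

/-- membership criterion via rows -/
lemma mem_iff_om {g : ℕ} {A : Matrix (Fin g ⊕ Fin g) (Fin g ⊕ Fin g) R} :
    A ∈ symplecticGroup (Fin g) R ↔ ∀ k l, om (A k) (A l) = J (Fin g) R k l := by
  rw [SymplecticGroup.mem_iff]
  constructor
  · intro h k l
    rw [om_eq, ← sympl_entry_eq, h]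
  · intro h
    ext k l
    rw [sympl_entry_eq, ← om_eq, h]

/-- SL₂ planted on the pair (inl i₀, inr i₀) -/
def P1 {g : ℕ} (i₀ : Fin g) (a b c d : R) : Matrix (Fin g ⊕ Fin g) (Fin g ⊕ Fin g) R :=
  fun k => match k with
  | Sum.inl i => sgl (Sum.inl i) (if i = i₀ then a else 1) + sgl (Sum.inr i) (if i = i₀ then b else 0)
  | Sum.inr i => sgl (Sum.inl i) (if i = i₀ then c else 0) + sgl (Sum.inr i) (if i = i₀ then d else 1)


lemma P1_mem {g : ℕ} (i₀ : Fin g) (a b c d : R) (h : a * d - b * c = 1) :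
    P1 i₀ a b c d ∈ symplecticGroup (Fin g) R := by
  rw [mem_iff_om]
  rintro (m|m) (n|n) <;>
    simp only [P1, om_add_left, om_add_right, om_sgl_sgl] <;>
    simp [J, fromBlocks, one_apply] <;>
    split_ifs <;> (try simp_all) <;> (try ring) <;> (try linear_combination -h) <;> (try linear_combination h)

lemma P1_mulVec {g : ℕ} (i₀ : Fin g) (a b c d : R) (v : (Fin g ⊕ Fin g) → R) :
    (P1 i₀ a b c d).mulVec v = fun k => match k with
      | Sum.inl i => if i = i₀ then a * v (Sum.inl i₀) + b * v (Sum.inr i₀) else v (Sum.inl i)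
      | Sum.inr i => if i = i₀ then c * v (Sum.inl i₀) + d * v (Sum.inr i₀) else v (Sum.inr i) := by
  funext k
  rcases k with i|i <;>
    simp [Matrix.mulVec, P1, add_dot, sgl_dot] <;> split_ifs with h <;> simp [h]

/-- SL₂ planted on (inl i₀, inl j₀) with inverse-transpose on (inr i₀, inr j₀) -/
def P2 {g : ℕ} (i₀ j₀ : Fin g) (a b c d : R) : Matrix (Fin g ⊕ Fin g) (Fin g ⊕ Fin g) R :=
  fun k => match k with
  | Sum.inl i =>
      if i = i₀ then sgl (Sum.inl i₀) a + sgl (Sum.inl j₀) b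
      else if i = j₀ then sgl (Sum.inl i₀) c + sgl (Sum.inl j₀) d
      else sgl (Sum.inl i) 1 + sgl (Sum.inl i) 0
  | Sum.inr i =>
      if i = i₀ then sgl (Sum.inr i₀) d + sgl (Sum.inr j₀) (-c)
      else if i = j₀ then sgl (Sum.inr i₀) (-b) + sgl (Sum.inr j₀) a
      else sgl (Sum.inr i) 1 + sgl (Sum.inr i) 0

lemma P2_mem {g : ℕ} (i₀ j₀ : Fin g) (hne : i₀ ≠ j₀) (a b c d : R) (h : a * d - b * c = 1) :
    P2 i₀ j₀ a b c d ∈ symplecticGroup (Fin g) R := by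
  rw [mem_iff_om]
  rintro (m|m) (n|n) <;>
    simp only [P2] <;> split_ifs <;>
    simp only [om_add_left, om_add_right, om_sgl_sgl] <;>
    simp [J, fromBlocks, one_apply] <;>
    split_ifs <;> (try simp_all) <;> (try ring) <;>
    (try linear_combination -h) <;> (try linear_combination h)

lemma P2_mulVec {g : ℕ} (i₀ j₀ : Fin g) (a b c d : R) (v : (Fin g ⊕ Fin g) → R) :
    (P2 i₀ j₀ a b c d).mulVec v = fun k => match k with
      | Sum.inl i => if i = i₀ then a * v (Sum.inl i₀) + b * v (Sum.inl j₀)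
          else if i = j₀ then c * v (Sum.inl i₀) + d * v (Sum.inl j₀) else v (Sum.inl i)
      | Sum.inr i => if i = i₀ then d * v (Sum.inr i₀) + (-c) * v (Sum.inr j₀)
          else if i = j₀ then (-b) * v (Sum.inr i₀) + a * v (Sum.inr j₀) else v (Sum.inr i) := by
  funext k
  rcases k with i|i <;>
    simp only [Matrix.mulVec, P2] <;> split_ifs with h1 h2 <;>
    simp_all [add_dot, sgl_dot]

lemma sl2_gcd (α β : ℤ) : ∃ p q r s : ℤ, p * s - q * r = 1 ∧ r * α + s * β = 0 := by
  by_cases hβ : β = 0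
  · exact ⟨1, 0, 0, 1, by ring, by simp [hβ]⟩
  · have hd : (Int.gcd α β : ℤ) ≠ 0 :=
      Int.natCast_ne_zero.mpr (fun h => hβ (Int.gcd_eq_zero_iff.mp h).2)
    obtain ⟨α', hα'⟩ : (Int.gcd α β : ℤ) ∣ α := Int.gcd_dvd_left α β
    obtain ⟨β', hβ'⟩ : (Int.gcd α β : ℤ) ∣ β := Int.gcd_dvd_right α β
    refine ⟨Int.gcdA α β, Int.gcdB α β, -β', α', ?_,
      by linear_combination (-β') * hα' + α' * hβ'⟩
    have hb := Int.gcd_eq_gcd_ab α β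
    have key : (Int.gcd α β : ℤ) * (Int.gcdA α β * α' - Int.gcdB α β * -β') =
        (Int.gcd α β : ℤ) * 1 := by
      linear_combination -hb - Int.gcdA α β * hα' - Int.gcdB α β * hβ'
    exact mul_left_cancel₀ hd key

lemma phase1 {g : ℕ} (x : (Fin g ⊕ Fin g) → ℤ) (t : Finset (Fin g)) :
    ∃ A ∈ symplecticGroup (Fin g) ℤ, ∀ i ∈ t, (A.mulVec x) (Sum.inr i) = 0 := by
  classical
  induction t using Finset.induction_on with
  | empty => exact ⟨1, one_mem _, by simp⟩
  | insert _ _ ha IH =>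
    rename_i a t'
    obtain ⟨A, hA, hz⟩ := IH
    set y := A.mulVec x with hy
    obtain ⟨p, q, r, s, hdet, hkill⟩ := sl2_gcd (y (Sum.inl a)) (y (Sum.inr a))
    refine ⟨P1 a p q r s * A, mul_mem (P1_mem a p q r s hdet) hA, ?_⟩
    intro i hi
    rw [← Matrix.mulVec_mulVec, ← hy, P1_mulVec]
    rcases Finset.mem_insert.mp hi with rfl | hi'
    · simpa using hkill
    · by_cases hia : i = a
      · subst hia; simpa using hkill
      · simp only [if_neg hia]
        exact hz i hi'

lemma phase2 {g : ℕ} (y : (Fin g ⊕ Fin g) → ℤ) (hy : ∀ i, y (Sum.inr i) = 0)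
    (i0 : Fin g) (t : Finset (Fin g)) (h0 : i0 ∉ t) :
    ∃ A ∈ symplecticGroup (Fin g) ℤ,
      (∀ i ∈ t, (A.mulVec y) (Sum.inl i) = 0) ∧ (∀ i, (A.mulVec y) (Sum.inr i) = 0) := by
  classical
  induction t using Finset.induction_on with
  | empty => exact ⟨1, one_mem _, by simp, by simpa using hy⟩
  | insert _ _ ha IH =>
    rename_i a t'
    obtain ⟨A, hA, hz, hzr⟩ := IH (fun h => h0 (Finset.mem_insert_of_mem h))
    have hai0 : a ≠ i0 := fun h => h0 (h ▸ Finset.mem_insert_self a t')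
    set z := A.mulVec y with hzdef
    obtain ⟨p, q, r, s, hdet, hkill⟩ := sl2_gcd (z (Sum.inl i0)) (z (Sum.inl a))
    refine ⟨P2 i0 a p q r s * A, mul_mem (P2_mem i0 a (Ne.symm hai0) p q r s hdet) hA, ?_, ?_⟩
    · intro i hi
      rw [← Matrix.mulVec_mulVec, ← hzdef, P2_mulVec]
      rcases Finset.mem_insert.mp hi with rfl | hi'
      · simp only [if_neg hai0, if_pos rfl]
        exact hkill
      · have hii0 : i ≠ i0 := fun h => h0 (h ▸ Finset.mem_insert_of_mem hi')
        by_cases hia : i = a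
        · subst hia; simp only [if_neg hii0, if_pos rfl]; exact hkill
        · simp only [if_neg hii0, if_neg hia]
          exact hz i hi'
    · intro i
      rw [← Matrix.mulVec_mulVec, ← hzdef, P2_mulVec]
      simp only [hzr]
      split_ifs <;> ring

lemma reduce_to_e1 {g : ℕ} (x : (Fin (g+1) ⊕ Fin (g+1)) → ℤ) :
    ∃ A ∈ symplecticGroup (Fin (g+1)) ℤ, ∃ m : ℤ,
      A.mulVec x = m • stdE1 (g+1) ℤ := by
  classical
  obtain ⟨A₁, hA₁, hy⟩ := phase1 x Finset.univ
  obtain ⟨A₂, hA₂, hz, hzr⟩ := phase2 (A₁.mulVec x) (fun i => hy i (Finset.mem_univ i))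
    0 (Finset.univ.erase 0) (Finset.notMem_erase _ _)
  refine ⟨A₂ * A₁, mul_mem hA₂ hA₁, (A₂.mulVec (A₁.mulVec x)) (Sum.inl 0), ?_⟩
  rw [← Matrix.mulVec_mulVec]
  funext k
  rcases k with i|i
  · by_cases hi : i = 0
    · subst hi; simp [stdE1]
    · have : (A₂.mulVec (A₁.mulVec x)) (Sum.inl i) = 0 :=
        hz i (Finset.mem_erase.mpr ⟨hi, Finset.mem_univ i⟩)
      have hiv : (i : ℕ) ≠ 0 := Fin.val_ne_zero_iff.mpr hi
      simp [stdE1, this, hiv]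
  · simp [stdE1, hzr i]

lemma om_self {g : ℕ} (x : (Fin g ⊕ Fin g) → R) : om x x = 0 := by
  simp [om, mul_comm]

lemma om_skew {g : ℕ} (x y : (Fin g ⊕ Fin g) → R) : om x y = -om y x := by
  simp only [om, ← Finset.sum_neg_distrib]
  congr 1; funext i; ring

lemma om_zero_right {g : ℕ} (x : (Fin g ⊕ Fin g) → R) : om x 0 = 0 := by simp [om]

lemma om_zero_left {g : ℕ} (x : (Fin g ⊕ Fin g) → R) : om 0 x = 0 := by simp [om]

lemma om_sgl_inl_left {g : ℕ} (i : Fin g) (x : R) (y : (Fin g ⊕ Fin g) → R) :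
    om (sgl (Sum.inl i) x) y = -(x * y (Sum.inr i)) := by
  simp [om, sgl, ite_mul, Finset.sum_ite_eq, Finset.sum_sub_distrib]

lemma om_sgl_inr_left {g : ℕ} (i : Fin g) (x : R) (y : (Fin g ⊕ Fin g) → R) :
    om (sgl (Sum.inr i) x) y = x * y (Sum.inl i) := by
  simp [om, sgl, ite_mul, Finset.sum_ite_eq, Finset.sum_sub_distrib]

lemma stdE1_eq_sgl {g : ℕ} (hg : 0 < g) :
    stdE1 g R = sgl (Sum.inl ⟨0, hg⟩) 1 := by
  funext k
  rcases k with i|i <;> simp [stdE1, sgl, Fin.ext_iff]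

lemma mulVec_stdE1 {g : ℕ} (hg : 0 < g) (B : Matrix (Fin g ⊕ Fin g) (Fin g ⊕ Fin g) R) (k) :
    (B.mulVec (stdE1 g R)) k = B k (Sum.inl ⟨0, hg⟩) := by
  rw [stdE1_eq_sgl hg]
  simp [Matrix.mulVec, dotProduct, sgl, mul_ite, Finset.sum_ite_eq']

section Maps
variable {S : Type*} [CommRing S] (f : R →+* S)

lemma J_map {g : ℕ} : (J (Fin g) R).map f = J (Fin g) S := by
  ext k l
  rcases k with i|i <;> rcases l with j|j <;>
    (simp [J, fromBlocks, Matrix.map_apply, one_apply, apply_ite]; try (split_ifs <;> simp_all))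

lemma sp_map {g : ℕ} {A : Matrix (Fin g ⊕ Fin g) (Fin g ⊕ Fin g) R}
    (hA : A ∈ symplecticGroup (Fin g) R) : A.map f ∈ symplecticGroup (Fin g) S := by
  rw [SymplecticGroup.mem_iff] at hA ⊢
  rw [← J_map f, ← Matrix.transpose_map, ← Matrix.map_mul, ← Matrix.map_mul, hA]

lemma mulVec_map {g : ℕ} (A : Matrix (Fin g ⊕ Fin g) (Fin g ⊕ Fin g) R)
    (v : (Fin g ⊕ Fin g) → R) :
    (A.map f).mulVec (fun k => f (v k)) = fun k => f (A.mulVec v k) := by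
  funext k
  simp only [Matrix.mulVec, dotProduct, Matrix.map_apply]
  rw [map_sum]
  simp [_root_.map_mul]

lemma om_map {g : ℕ} (x y : (Fin g ⊕ Fin g) → R) :
    om (fun k => f (x k)) (fun k => f (y k)) = f (om x y) := by
  simp only [om]
  rw [map_sum]
  simp [_root_.map_mul, map_sub]

lemma stdE1_map {g : ℕ} : (fun k => f (stdE1 g R k)) = stdE1 g S := by
  funext k
  rcases k with i|i <;> (simp [stdE1, apply_ite]; try (split_ifs <;> simp_all))

end Maps

lemma sp_inv_mem {g : ℕ} {A : Matrix (Fin g ⊕ Fin g) (Fin g ⊕ Fin g) R}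
    (hA : A ∈ symplecticGroup (Fin g) R) : A⁻¹ ∈ symplecticGroup (Fin g) R := by
  rw [SymplecticGroup.inv_eq_symplectic_inv A hA]
  exact mul_mem (mul_mem (SymplecticGroup.neg_mem (SymplecticGroup.J_mem _ _))
    (SymplecticGroup.transpose_mem hA)) (SymplecticGroup.J_mem _ _)

lemma sp_mul_inv {g : ℕ} {A : Matrix (Fin g ⊕ Fin g) (Fin g ⊕ Fin g) R}
    (hA : A ∈ symplecticGroup (Fin g) R) : A * A⁻¹ = 1 :=
  Matrix.mul_nonsing_inv A (SymplecticGroup.symplectic_det hA)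

lemma sp_inv_mul {g : ℕ} {A : Matrix (Fin g ⊕ Fin g) (Fin g ⊕ Fin g) R}
    (hA : A ∈ symplecticGroup (Fin g) R) : A⁻¹ * A = 1 :=
  Matrix.nonsing_inv_mul A (SymplecticGroup.symplectic_det hA)

section Par
variable {g : ℕ}

/-- extend a 2g-vector by two extra coordinates at position 0 -/
def emb (x : (Fin g ⊕ Fin g) → R) (α β : R) : (Fin (g+1) ⊕ Fin (g+1)) → R :=
  fun k => match k with
  | Sum.inl i => Fin.cases α (fun i' => x (Sum.inl i')) i
  | Sum.inr i => Fin.cases β (fun i' => x (Sum.inr i')) i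

@[simp] lemma emb_inl_zero (x : (Fin g ⊕ Fin g) → R) (α β : R) :
    emb x α β (Sum.inl 0) = α := rfl
@[simp] lemma emb_inr_zero (x : (Fin g ⊕ Fin g) → R) (α β : R) :
    emb x α β (Sum.inr 0) = β := rfl
@[simp] lemma emb_inl_succ (x : (Fin g ⊕ Fin g) → R) (α β : R) (i : Fin g) :
    emb x α β (Sum.inl i.succ) = x (Sum.inl i) := by simp [emb]
@[simp] lemma emb_inr_succ (x : (Fin g ⊕ Fin g) → R) (α β : R) (i : Fin g) :
    emb x α β (Sum.inr i.succ) = x (Sum.inr i) := by simp [emb]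

lemma om_emb (x x' : (Fin g ⊕ Fin g) → R) (α β α' β' : R) :
    om (emb x α β) (emb x' α' β') = om x x' + (β * α' - α * β') := by
  simp only [om, Fin.sum_univ_succ, emb_inl_zero, emb_inr_zero, emb_inl_succ, emb_inr_succ]
  ring

lemma emb_dot (x x' : (Fin g ⊕ Fin g) → R) (α β α' β' : R) :
    emb x α β ⬝ᵥ emb x' α' β' = x ⬝ᵥ x' + (α * α' + β * β') := by
  simp only [dotProduct, Fintype.sum_sum_type, Fin.sum_univ_succ, emb_inl_zero, emb_inr_zero,
    emb_inl_succ, emb_inr_succ]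
  ring

/-- the canonical element of the stabilizer of e₁ built from `a`, `u`, and `C` -/
def par (a : R) (u : (Fin g ⊕ Fin g) → R) (C : Matrix (Fin g ⊕ Fin g) (Fin g ⊕ Fin g) R) :
    Matrix (Fin (g+1) ⊕ Fin (g+1)) (Fin (g+1) ⊕ Fin (g+1)) R :=
  fun k => match k with
  | Sum.inl i => Fin.cases (emb (Cᵀ.mulVec ((J (Fin g) R).mulVec u)) 1 a)
      (fun i' => emb (C (Sum.inl i')) 0 (u (Sum.inl i'))) i
  | Sum.inr i => Fin.cases (emb (0 : (Fin g ⊕ Fin g) → R) 0 1)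
      (fun i' => emb (C (Sum.inr i')) 0 (u (Sum.inr i'))) i

@[simp] lemma par_inl_zero (a : R) (u : (Fin g ⊕ Fin g) → R) (C) :
    par a u C (Sum.inl 0) = emb (Cᵀ.mulVec ((J (Fin g) R).mulVec u)) 1 a := rfl
@[simp] lemma par_inr_zero (a : R) (u : (Fin g ⊕ Fin g) → R) (C) :
    par a u C (Sum.inr 0) = emb (0 : (Fin g ⊕ Fin g) → R) 0 1 := rfl
@[simp] lemma par_inl_succ (a : R) (u : (Fin g ⊕ Fin g) → R) (C) (i : Fin g) :
    par a u C (Sum.inl i.succ) = emb (C (Sum.inl i)) 0 (u (Sum.inl i)) := by simp [par]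
@[simp] lemma par_inr_succ (a : R) (u : (Fin g ⊕ Fin g) → R) (C) (i : Fin g) :
    par a u C (Sum.inr i.succ) = emb (C (Sum.inr i)) 0 (u (Sum.inr i)) := by simp [par]

/-- the defining property of the top row vector r = Cᵀ J u -/
lemma om_r_row {C : Matrix (Fin g ⊕ Fin g) (Fin g ⊕ Fin g) R}
    (hC : C ∈ symplecticGroup (Fin g) R) (u : (Fin g ⊕ Fin g) → R) (l : Fin g ⊕ Fin g) :
    om (Cᵀ.mulVec ((J (Fin g) R).mulVec u)) (C l) = u l := by
  rw [om_eq]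
  have h1 : Cᵀ.mulVec ((J (Fin g) R).mulVec u) ⬝ᵥ (J (Fin g) R).mulVec (C l)
      = ((J (Fin g) R).mulVec u) ⬝ᵥ C.mulVec ((J (Fin g) R).mulVec (C l)) := by
    rw [Matrix.mulVec_transpose, ← Matrix.dotProduct_mulVec]
  rw [h1]
  have hCl : C l = Cᵀ.mulVec (Pi.single l 1) := by
    funext m
    simp [Matrix.mulVec_single]
  rw [hCl, Matrix.mulVec_mulVec, Matrix.mulVec_mulVec, SymplecticGroup.mem_iff.mp hC]
  rcases l with j|j <;>
  · rw [Matrix.mulVec_single]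
    simp only [dotProduct, Fintype.sum_sum_type, mulVec_J_inl, mulVec_J_inr,
      J_apply_inl_inl, J_apply_inl_inr, J_apply_inr_inl, J_apply_inr_inr]
    simp [mul_ite, Finset.sum_ite_eq, J_apply_inl_inl, J_apply_inl_inr, J_apply_inr_inl, J_apply_inr_inr]

lemma par_mem {a : R} {u : (Fin g ⊕ Fin g) → R} {C : Matrix (Fin g ⊕ Fin g) (Fin g ⊕ Fin g) R}
    (hC : C ∈ symplecticGroup (Fin g) R) :
    par a u C ∈ symplecticGroup (Fin (g+1)) R := by
  have hCr := mem_iff_om.mp hC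
  rw [mem_iff_om]
  have hr := om_r_row hC u
  have hr' : ∀ l, om (C l) (Cᵀ.mulVec ((J (Fin g) R).mulVec u)) = -u l := fun l => by
    rw [om_skew, hr]
  rintro (i|i) (j|j) <;>
    induction i using Fin.cases <;> induction j using Fin.cases <;>
    simp only [par_inl_zero, par_inr_zero, par_inl_succ, par_inr_succ, om_emb, om_self,
      om_zero_left, om_zero_right, hr, hr', hCr, J_apply_inl_inl, J_apply_inl_inr,
      J_apply_inr_inl, J_apply_inr_inr] <;>
    simp [Fin.succ_ne_zero, (Fin.succ_ne_zero _).symm, Fin.succ_inj] <;>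
    (try split_ifs <;> simp_all)

lemma par_mulVec_e1 (a : R) (u : (Fin g ⊕ Fin g) → R)
    (C : Matrix (Fin g ⊕ Fin g) (Fin g ⊕ Fin g) R) :
    (par a u C).mulVec (stdE1 (g+1) R) = stdE1 (g+1) R := by
  have he : stdE1 (g+1) R = emb (0 : (Fin g ⊕ Fin g) → R) 1 0 := by
    funext k
    rcases k with i|i <;> induction i using Fin.cases <;>
      simp [stdE1, Fin.succ_ne_zero, Fin.ext_iff]
  rw [he]
  funext k
  show par a u C k ⬝ᵥ emb 0 1 0 = emb (0 : (Fin g ⊕ Fin g) → R) 1 0 k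
  rcases k with i|i <;> induction i using Fin.cases <;>
    simp [emb_dot]
end Par

section Decomp
variable {g : ℕ}

lemma row_eq_single (C : Matrix (Fin g ⊕ Fin g) (Fin g ⊕ Fin g) R) (l : Fin g ⊕ Fin g) :
    C l = Cᵀ.mulVec (Pi.single l 1) := by
  funext m
  simp [Matrix.mulVec_single]

lemma om_row_eq_vecMul (C : Matrix (Fin g ⊕ Fin g) (Fin g ⊕ Fin g) R)
    (x : (Fin g ⊕ Fin g) → R) (l : Fin g ⊕ Fin g) :
    om x (C l) = Matrix.vecMul x (J (Fin g) R * Cᵀ) l := by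
  rw [om_eq, row_eq_single C l, Matrix.mulVec_mulVec, Matrix.mulVec_single]
  simp [Matrix.vecMul, dotProduct, mul_comm]

lemma om_rows_cancel {C : Matrix (Fin g ⊕ Fin g) (Fin g ⊕ Fin g) R}
    (hC : C ∈ symplecticGroup (Fin g) R) {x y : (Fin g ⊕ Fin g) → R}
    (h : ∀ l, om x (C l) = om y (C l)) : x = y := by
  have hM : IsUnit (J (Fin g) R * Cᵀ).det := by
    rw [Matrix.det_mul, Matrix.det_transpose]
    exact (Matrix.isUnit_det_J (Fin g) R).mul (SymplecticGroup.symplectic_det hC)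
  have hv : Matrix.vecMul x (J (Fin g) R * Cᵀ) = Matrix.vecMul y (J (Fin g) R * Cᵀ) := by
    funext l
    rw [← om_row_eq_vecMul, ← om_row_eq_vecMul, h]
  calc x = Matrix.vecMul (Matrix.vecMul x (J (Fin g) R * Cᵀ)) (J (Fin g) R * Cᵀ)⁻¹ := by
          rw [Matrix.vecMul_vecMul, Matrix.mul_nonsing_inv _ hM, Matrix.vecMul_one]
    _ = Matrix.vecMul (Matrix.vecMul y (J (Fin g) R * Cᵀ)) (J (Fin g) R * Cᵀ)⁻¹ := by rw [hv]
    _ = y := by rw [Matrix.vecMul_vecMul, Matrix.mul_nonsing_inv _ hM, Matrix.vecMul_one]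

lemma J_em (m n : Fin g ⊕ Fin g) :
    J (Fin (g+1)) R (Sum.map Fin.succ Fin.succ m) (Sum.map Fin.succ Fin.succ n)
      = J (Fin g) R m n := by
  rcases m with i|i <;> rcases n with j|j <;>
    simp [J_apply_inl_inl, J_apply_inl_inr, J_apply_inr_inl, J_apply_inr_inr, Fin.succ_inj]

lemma stab_decomp {B : Matrix (Fin (g+1) ⊕ Fin (g+1)) (Fin (g+1) ⊕ Fin (g+1)) R}
    (hB : B ∈ symplecticGroup (Fin (g+1)) R)
    (hBe : B.mulVec (stdE1 (g+1) R) = stdE1 (g+1) R) :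
    (fun m n => B (Sum.map Fin.succ Fin.succ m) (Sum.map Fin.succ Fin.succ n))
        ∈ symplecticGroup (Fin g) R ∧
    B = par (B (Sum.inl 0) (Sum.inr 0))
        (fun m => B (Sum.map Fin.succ Fin.succ m) (Sum.inr 0))
        (fun m n => B (Sum.map Fin.succ Fin.succ m) (Sum.map Fin.succ Fin.succ n)) := by
  set a := B (Sum.inl 0) (Sum.inr 0) with ha
  set u : (Fin g ⊕ Fin g) → R := fun m => B (Sum.map Fin.succ Fin.succ m) (Sum.inr 0) with hu
  set C : Matrix (Fin g ⊕ Fin g) (Fin g ⊕ Fin g) R :=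
    fun m n => B (Sum.map Fin.succ Fin.succ m) (Sum.map Fin.succ Fin.succ n) with hCdef
  have h0 : (⟨0, Nat.succ_pos g⟩ : Fin (g+1)) = 0 := rfl
  have hcol : ∀ k, B k (Sum.inl 0) = stdE1 (g+1) R k := by
    intro k
    rw [← h0, ← mulVec_stdE1 (Nat.succ_pos g) B k, hBe]
  -- rows indexed by embedded coordinates
  have hrows_em : ∀ m, B (Sum.map Fin.succ Fin.succ m) = emb (C m) 0 (u m) := by
    intro m
    funext l
    rcases l with i|i <;> induction i using Fin.cases <;>
      rcases m with i'|i' <;>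
      simp [emb, hcol, stdE1, Fin.succ_ne_zero, hu, hCdef]
  have hrow0 : B (Sum.inl 0) =
      emb (fun m => B (Sum.inl 0) (Sum.map Fin.succ Fin.succ m)) 1 a := by
    funext l
    rcases l with i|i <;> induction i using Fin.cases <;>
      simp [emb, hcol, stdE1, ha]
  have hBrows := mem_iff_om.mp hB
  have hC : C ∈ symplecticGroup (Fin g) R := by
    rw [mem_iff_om]
    intro m n
    have h := hBrows (Sum.map Fin.succ Fin.succ m) (Sum.map Fin.succ Fin.succ n)
    rw [hrows_em m, hrows_em n, om_emb, J_em] at h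
    linear_combination h
  refine ⟨hC, ?_⟩
  -- the top row
  have hρ : ∀ l, om (fun n => B (Sum.inl 0) (Sum.map Fin.succ Fin.succ n)) (C l) = u l := by
    intro l
    have h := hBrows (Sum.inl 0) (Sum.map Fin.succ Fin.succ l)
    rw [hrow0, hrows_em l, om_emb] at h
    have hJ : J (Fin (g+1)) R (Sum.inl 0) (Sum.map Fin.succ Fin.succ l) = 0 := by
      rcases l with j|j <;>
        simp [J_apply_inl_inl, J_apply_inl_inr, (Fin.succ_ne_zero j).symm]
    rw [hJ] at h
    linear_combination h
  have hρr : (fun n => B (Sum.inl 0) (Sum.map Fin.succ Fin.succ n))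
      = Cᵀ.mulVec ((J (Fin g) R).mulVec u) :=
    om_rows_cancel hC (fun l => by rw [hρ l, om_r_row hC u l])
  -- row (inr 0)
  have hrowf : B (Sum.inr 0) = emb (0 : (Fin g ⊕ Fin g) → R) 0 1 := by
    have hBt := mem_iff_om.mp (SymplecticGroup.transpose_mem hB)
    have hcolv : Bᵀ (Sum.inl 0) = sgl (Sum.inl 0) (1 : R) := by
      funext k
      rw [Matrix.transpose_apply, hcol k, stdE1_eq_sgl (Nat.succ_pos g), h0]
    funext l
    have h := hBt (Sum.inl 0) l
    rw [hcolv, om_sgl_inl_left] at h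
    have h' : B (Sum.inr 0) l = -(J (Fin (g+1)) R (Sum.inl 0) l) := by
      rw [← h]; simp [Matrix.transpose_apply]
    rw [h']
    rcases l with i|i <;> induction i using Fin.cases <;>
      simp [emb, J_apply_inl_inl, J_apply_inl_inr, (Fin.succ_ne_zero _).symm]
  -- final assembly
  funext k
  rcases k with i|i <;> induction i using Fin.cases
  · rw [par_inl_zero, ← hρr]; exact hrow0
  · rename_i i
    rw [par_inl_succ]
    have := hrows_em (Sum.inl i)
    simpa [Sum.map] using this
  · rw [par_inr_zero, hrowf]
  · rename_i i
    rw [par_inr_succ]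
    have := hrows_em (Sum.inr i)
    simpa [Sum.map] using this

end Decomp

section Assembly
variable {S : Type*} [CommRing S]

lemma par_map {g : ℕ} (f : R →+* S) (a : R) (u : (Fin g ⊕ Fin g) → R)
    (C : Matrix (Fin g ⊕ Fin g) (Fin g ⊕ Fin g) R) :
    (par a u C).map f = par (f a) (fun m => f (u m)) (C.map f) := by
  have hr : (fun m => f ((Cᵀ.mulVec ((J (Fin g) R).mulVec u)) m))
      = (C.map f)ᵀ.mulVec ((J (Fin g) S).mulVec (fun m => f (u m))) := by
    rw [← Matrix.transpose_map, ← J_map f, mulVec_map, mulVec_map]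
  have hr' := congrFun hr
  simp only [Matrix.mulVec_mulVec] at hr'
  funext k l
  rcases k with i|i <;> induction i using Fin.cases <;>
    rcases l with j|j <;> induction j using Fin.cases <;>
    simp [Matrix.map_apply, hr']

lemma zmod_int_val_cast {ℓ : ℕ} [NeZero ℓ] (y : ZMod ℓ) : ((y.val : ℤ) : ZMod ℓ) = y := by
  simp [ZMod.natCast_val, ZMod.cast_id]

lemma stab_step {g ℓ : ℕ} (hℓ : 0 < ℓ)
    (IH : ∀ C ∈ symplecticGroup (Fin g) (ZMod ℓ),
      ∃ D ∈ symplecticGroup (Fin g) ℤ, D.map (⇑(Int.castRingHom (ZMod ℓ))) = C)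
    (B : Matrix (Fin (g+1) ⊕ Fin (g+1)) (Fin (g+1) ⊕ Fin (g+1)) (ZMod ℓ))
    (hB : B ∈ symplecticGroup (Fin (g+1)) (ZMod ℓ))
    (hBe : B.mulVec (stdE1 (g+1) (ZMod ℓ)) = stdE1 (g+1) (ZMod ℓ)) :
    ∃ A ∈ symplecticGroup (Fin (g+1)) ℤ,
      A.mulVec (stdE1 (g+1) ℤ) = stdE1 (g+1) ℤ ∧
      A.map (⇑(Int.castRingHom (ZMod ℓ))) = B := by
  haveI : NeZero ℓ := ⟨hℓ.ne'⟩
  obtain ⟨hC, hdec⟩ := stab_decomp hB hBe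
  obtain ⟨D, hD, hDmap⟩ := IH _ hC
  set aZ : ℤ := ((B (Sum.inl 0) (Sum.inr 0)).val : ℤ)
  set uZ : (Fin g ⊕ Fin g) → ℤ :=
    fun m => ((B (Sum.map Fin.succ Fin.succ m) (Sum.inr 0)).val : ℤ)
  refine ⟨par aZ uZ D, par_mem hD, par_mulVec_e1 _ _ _, ?_⟩
  rw [par_map (Int.castRingHom (ZMod ℓ)) aZ uZ D]
  have h1 : (Int.castRingHom (ZMod ℓ)) aZ = B (Sum.inl 0) (Sum.inr 0) := zmod_int_val_cast _
  have h2 : (fun m => (Int.castRingHom (ZMod ℓ)) (uZ m))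
      = fun m => B (Sum.map Fin.succ Fin.succ m) (Sum.inr 0) := by
    funext m; exact zmod_int_val_cast _
  rw [h1, h2, hDmap, ← hdec]

lemma surj_all (ℓ : ℕ) (hℓ : 0 < ℓ) : ∀ g, ∀ B ∈ symplecticGroup (Fin g) (ZMod ℓ),
    ∃ A ∈ symplecticGroup (Fin g) ℤ, A.map (⇑(Int.castRingHom (ZMod ℓ))) = B := by
  haveI : NeZero ℓ := ⟨hℓ.ne'⟩
  intro g
  induction g with
  | zero =>
    intro B _
    refine ⟨1, one_mem _, ?_⟩
    ext k l
    rcases k with i|i <;> exact i.elim0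
  | succ g IH =>
    intro B hB
    set f := Int.castRingHom (ZMod ℓ) with hf
    set x : (Fin (g+1) ⊕ Fin (g+1)) → ℤ := fun k => ((B k (Sum.inl 0)).val : ℤ) with hxdef
    obtain ⟨A₁, hA₁, m, hAx⟩ := reduce_to_e1 x
    have hx : x = A₁⁻¹.mulVec (m • stdE1 (g+1) ℤ) := by
      rw [← hAx, Matrix.mulVec_mulVec, sp_inv_mul hA₁, Matrix.one_mulVec]
    have hdvd : ∀ k, m ∣ x k := by
      intro k
      rw [hx, Matrix.mulVec_smul]
      exact Dvd.intro _ rfl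
    set w : (Fin (g+1) ⊕ Fin (g+1)) → ℤ := fun k => ((B k (Sum.inr 0)).val : ℤ) with hwdef
    have homBw : ((om x w : ℤ) : ZMod ℓ) = -1 := by
      have hBt := mem_iff_om.mp (SymplecticGroup.transpose_mem hB) (Sum.inl 0) (Sum.inr 0)
      have hxc : (fun k => f (x k)) = Bᵀ (Sum.inl 0) := by
        funext k; exact zmod_int_val_cast _
      have hwc : (fun k => f (w k)) = Bᵀ (Sum.inr 0) := by
        funext k; exact zmod_int_val_cast _
      have h := om_map f x w
      rw [hxc, hwc, hBt, J_apply_inl_inr] at h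
      have h2 : f (om x w) = -1 := by simpa using h.symm
      simpa [f] using h2
    have hmom : m ∣ om x w :=
      Finset.dvd_sum fun i _ =>
        dvd_sub (dvd_mul_of_dvd_left (hdvd _) _) (dvd_mul_of_dvd_left (hdvd _) _)
    have hldvd : (ℓ:ℤ) ∣ om x w + 1 := by
      have h0 : ((om x w + 1 : ℤ) : ZMod ℓ) = 0 := by
        push_cast [homBw]
        ring
      exact (ZMod.intCast_zmod_eq_zero_iff_dvd _ _).mp h0
    obtain ⟨t, ht⟩ := hldvd
    obtain ⟨c, hc⟩ := hmom
    have hbez : m * (-c) - (-t) * (ℓ:ℤ) = 1 := by linear_combination hc - ht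
    set P : Matrix (Fin (g+1) ⊕ Fin (g+1)) (Fin (g+1) ⊕ Fin (g+1)) ℤ :=
      P1 (0 : Fin (g+1)) m (-t) (ℓ:ℤ) (-c) with hPdef
    have hP : P ∈ symplecticGroup (Fin (g+1)) ℤ := P1_mem _ _ _ _ _ hbez
    have hPe : P.mulVec (stdE1 (g+1) ℤ) = m • stdE1 (g+1) ℤ + (ℓ:ℤ) • sgl (Sum.inr 0) 1 := by
      rw [hPdef, P1_mulVec]
      funext k
      rcases k with i|i <;>
      · simp only [stdE1, sgl, Pi.add_apply, Pi.smul_apply, smul_eq_mul]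
        split_ifs <;> simp_all [Fin.ext_iff, -Fin.val_eq_zero_iff] <;> ring
    set A₂ := A₁⁻¹ * P with hA₂def
    have hA₂ : A₂ ∈ symplecticGroup (Fin (g+1)) ℤ := mul_mem (sp_inv_mem hA₁) hP
    have hA₂z : A₂.mulVec (stdE1 (g+1) ℤ) = x + (ℓ:ℤ) • A₁⁻¹.mulVec (sgl (Sum.inr 0) 1) := by
      have hx' : x = m • A₁⁻¹.mulVec (stdE1 (g+1) ℤ) := by rw [hx, Matrix.mulVec_smul]
      rw [hA₂def, ← Matrix.mulVec_mulVec, hPe, Matrix.mulVec_add, Matrix.mulVec_smul,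
        Matrix.mulVec_smul, ← hx']
    set Bm := A₂.map ⇑f with hBmdef
    have hBm : Bm ∈ symplecticGroup (Fin (g+1)) (ZMod ℓ) := sp_map f hA₂
    have hBme : Bm.mulVec (stdE1 (g+1) (ZMod ℓ)) = fun k => B k (Sum.inl 0) := by
      rw [hBmdef, ← stdE1_map f, mulVec_map f, hA₂z]
      funext k
      simp only [Pi.add_apply, Pi.smul_apply, smul_eq_mul]
      rw [map_add f, _root_.map_mul f]
      have hfl : f ((ℓ:ℤ)) = 0 := by simp [f]
      rw [hfl, zero_mul, add_zero]
      exact zmod_int_val_cast _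
    set Dbar := Bm⁻¹ * B with hDbardef
    have hDbar : Dbar ∈ symplecticGroup (Fin (g+1)) (ZMod ℓ) := mul_mem (sp_inv_mem hBm) hB
    have hDbare : Dbar.mulVec (stdE1 (g+1) (ZMod ℓ)) = stdE1 (g+1) (ZMod ℓ) := by
      have hcol : B.mulVec (stdE1 (g+1) (ZMod ℓ)) = fun k => B k (Sum.inl 0) := by
        funext k
        rw [mulVec_stdE1 (Nat.succ_pos g) B k]
        rfl
      rw [hDbardef, ← Matrix.mulVec_mulVec, hcol, ← hBme, Matrix.mulVec_mulVec,
        sp_inv_mul hBm, Matrix.one_mulVec]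
    obtain ⟨D, hD, _, hDmap⟩ := stab_step hℓ IH Dbar hDbar hDbare
    refine ⟨A₂ * D, mul_mem hA₂ hD, ?_⟩
    rw [Matrix.map_mul, hDmap, ← hBmdef, hDbardef, ← Matrix.mul_assoc,
      sp_mul_inv hBm, Matrix.one_mul]

end Assembly

theorem stabilizer_reduction_surjective (g ℓ : ℕ) (hg : 0 < g) (hℓ : 0 < ℓ)
    (B : Matrix (Fin g ⊕ Fin g) (Fin g ⊕ Fin g) (ZMod ℓ))
    (hB : B ∈ Matrix.symplecticGroup (Fin g) (ZMod ℓ))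
    (hBe : B.mulVec (stdE1 g (ZMod ℓ)) = stdE1 g (ZMod ℓ)) :
    ∃ A : Matrix (Fin g ⊕ Fin g) (Fin g ⊕ Fin g) ℤ,
      A ∈ Matrix.symplecticGroup (Fin g) ℤ ∧
      A.mulVec (stdE1 g ℤ) = stdE1 g ℤ ∧
      A.map (Int.cast : ℤ → ZMod ℓ) = B := by
  obtain ⟨g', rfl⟩ : ∃ g', g = g' + 1 := ⟨g - 1, (Nat.succ_pred_eq_of_pos hg).symm⟩
  obtain ⟨A, hA, hAe, hAmap⟩ := stab_step hℓ (surj_all ℓ hℓ g') B hB hBe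
  exact ⟨A, hA, hAe, hAmap⟩
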